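/- arXiv:2104.09148 — 2 statements merged into one kernel-verified Lean document; each statement's English description precedes it below -/
import Mathlib

section
/- Suppose there exists a coloring e:[ω₁]²→ω such that for every infinite A ⊆ ω₁ and every uncountable B ⊆ ω₁ there is α ∈ A such that {e(α,β) : β ∈ B, β > α} = ω. Then there exists a set X of functions from ω to ω with |X| = ℵ₁ such that for every function y:ω→ω there is x ∈ X for which the set {n < ω : x(n) = y(n)} is infinite. -/
noncomputable section

open Cardinal Set Ordinal

/-- The set of countable ordinals, as a type of order type `ω₁`. -/
abbrev Omega1 : Type := (Ordinal.omega 1).ToType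

instance : Nonempty Omega1 :=
  Ordinal.toType_nonempty_iff_ne_zero.2
    (Ordinal.omega0_pos.trans Ordinal.omega0_lt_omega_one).ne'

/-- Proposition (M): there is a nonmeager set of reals of cardinality `ℵ₁`. -/
def PropM : Prop := ∃ X : Set ℝ, #X = Cardinal.aleph 1 ∧ ¬ IsMeagre X

/-- From a coloring `e` as in statement 5 one obtains a set `X` of functions from
`ω` to `ω` of cardinality `ℵ₁` such that every `y : ω → ω` agrees infinitely often
with some `x ∈ X`. -/
theorem statement6
    (h : ∃ e : Omega1 → Omega1 → ℕ,
      ∀ A : Set Omega1, A.Infinite → ∀ B : Set Omega1, ¬ B.Countable →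
        ∃ α ∈ A, {n : ℕ | ∃ β ∈ B, α < β ∧ e α β = n} = Set.univ) :
    ∃ X : Set (ℕ → ℕ), #X = Cardinal.aleph 1 ∧
      ∀ y : ℕ → ℕ, ∃ x ∈ X, {n : ℕ | x n = y n}.Infinite := by
  obtain ⟨e, he⟩ := h
  have hcard : #Omega1 = Cardinal.aleph 1 := by
    rw [Cardinal.mk_toType]; exact Ordinal.card_omega 1
  have hinf : Infinite Omega1 := by
    rw [Cardinal.infinite_iff, hcard]; exact Cardinal.aleph0_le_aleph 1
  set α : ℕ ↪ Omega1 := Infinite.natEmbedding Omega1 with hα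
  set x : Omega1 → (ℕ → ℕ) := fun β n => e (α n) β with hx
  have hmkfun : #(ℕ → ℕ) = Cardinal.continuum := by
    rw [Cardinal.mk_arrow, Cardinal.mk_nat, Cardinal.lift_id,
      Cardinal.power_self_eq le_rfl, Cardinal.two_power_aleph0]
  obtain ⟨f⟩ : Nonempty (Omega1 ↪ (ℕ → ℕ)) := by
    rw [← Cardinal.le_def, hcard, hmkfun]
    exact Cardinal.aleph_one_le_continuum
  refine ⟨Set.range x ∪ Set.range f, ?_, ?_⟩
  · apply le_antisymm
    · calc #(Set.range x ∪ Set.range f : Set (ℕ → ℕ))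
          ≤ #(Set.range x) + #(Set.range f) := Cardinal.mk_union_le _ _
        _ ≤ Cardinal.aleph 1 + Cardinal.aleph 1 := by
            refine add_le_add (hcard ▸ Cardinal.mk_range_le) ?_
            rw [Cardinal.mk_range_eq f f.injective, hcard]
        _ = Cardinal.aleph 1 := by
            exact Cardinal.add_eq_self (Cardinal.aleph0_le_aleph 1)
    · rw [← hcard, ← Cardinal.mk_range_eq f f.injective]
      exact Cardinal.mk_le_mk_of_subset Set.subset_union_right
  · intro y
    by_contra hcon
    push_neg at hcon
    have hm : ∀ β : Omega1, ∃ m, ∀ n, m ≤ n → e (α n) β ≠ y n := by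
      intro β
      have hfin : {n | x β n = y n}.Finite :=
        (hcon (x β) (Or.inl ⟨β, rfl⟩))
      obtain ⟨b, hb⟩ := hfin.bddAbove
      refine ⟨b + 1, fun n hn hne => ?_⟩
      exact absurd (hb (show n ∈ {n | x β n = y n} from hne)) (by omega)
    choose m hm using hm
    have huncount : ∃ m₀, ¬ (m ⁻¹' {m₀}).Countable := by
      by_contra hall
      push_neg at hall
      have hu : (Set.univ : Set Omega1).Countable := by
        have heq : (Set.univ : Set Omega1) = ⋃ k, m ⁻¹' {k} := by
          ext β; simp
        rw [heq]; exact Set.countable_iUnion hall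
      have : #Omega1 ≤ Cardinal.aleph0 := Cardinal.mk_le_aleph0_iff.2
        (Set.countable_univ_iff.1 hu)
      rw [hcard] at this
      exact absurd this (not_le.2 (Cardinal.aleph0_lt_aleph_one))
    obtain ⟨m₀, hB⟩ := huncount
    have hA : (α '' Set.Ici m₀).Infinite :=
      (Set.Ici_infinite m₀).image (fun a _ b _ hab => α.injective hab)
    obtain ⟨a, ⟨n, hn, rfl⟩, hsurj⟩ := he _ hA _ hB
    have hyn : y n ∈ {k | ∃ β ∈ m ⁻¹' {m₀}, α n < β ∧ e (α n) β = k} := by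
      rw [hsurj]; trivial
    obtain ⟨β, hβ, _, heq⟩ := hyn
    simp only [Set.mem_preimage, Set.mem_singleton_iff] at hβ
    exact hm β n (by rw [hβ]; exact hn) heq
end
end

section
/- Let p:[ω₁]²→ω be a partition with injective fibers and almost-disjoint fibers, and let c:[ω₁]²→ω be any coloring. Then the partial order ℚ(p,c) has Property K: every uncountable set of conditions of ℚ(p,c) contains an uncountable subset of pairwise compatible conditions. -/
noncomputable section

open Cardinal Set Ordinal

instance iwoO : IsWellOrder Omega1 (fun a b => a < b) := isWellOrder_lt

lemma mkO : #Omega1 = aleph 1 := by rw [Cardinal.mk_toType, Ordinal.card_omega]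

lemma ctIio (x : Omega1) : (Set.Iio x).Countable := by
  rw [countable_iff_lt_aleph_one]
  have h1 := Ordinal.card_typein (r := fun (a b : Omega1) => a < b) x
  have h := Ordinal.typein_lt_self (o := Ordinal.omega 1) x
  have h2 : #(Set.Iio x) = #{y : Omega1 // (fun a b => a < b) y x} := rfl
  rw [h2, show #{y : Omega1 // (fun a b => a < b) y x} = _ from h1.symm, ← Cardinal.lt_ord, Cardinal.ord_aleph]
  exact h

lemma ctIic (x : Omega1) : (Set.Iic x).Countable := by
  have : Set.Iic x ⊆ Set.Iio x ∪ {x} := by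
    intro y hy
    rcases (Set.mem_Iic.1 hy).lt_or_eq with h | h
    · exact Or.inl h
    · exact Or.inr (by simp [h])
  exact (((ctIio x).union (countable_singleton x)).mono this)

lemma nctO : ¬ (univ : Set Omega1).Countable := by
  rw [countable_iff_lt_aleph_one, mk_univ, mkO]
  simp

/-- countable sets are strictly bounded -/
lemma bddO {C : Set Omega1} (hC : C.Countable) : ∃ β : Omega1, ∀ x ∈ C, x < β := by
  by_contra h
  push_neg at h
  apply nctO
  have : (univ : Set Omega1) ⊆ ⋃ x ∈ C, Set.Iic x := by
    intro β _
    obtain ⟨x, hx, hb⟩ := h β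
    exact Set.mem_biUnion hx hb
  exact (hC.biUnion (fun x _ => ctIic x)).mono this

lemma exists_gtO (x : Omega1) : ∃ y : Omega1, x < y := by
  obtain ⟨β, hβ⟩ := bddO (countable_singleton x)
  exact ⟨β, hβ x rfl⟩

/-- least element of a nonempty set -/
lemma minO (s : Set Omega1) (hs : s.Nonempty) : ∃ m ∈ s, ∀ x ∈ s, ¬ x < m :=
  ⟨wellFounded_lt.min s hs, wellFounded_lt.min_mem s hs,
    fun x hx => wellFounded_lt.not_lt_min s hx⟩

/-- uncountable fiber lemma -/
lemma exists_unc_fiber {X Y : Type} (g : X → Y) (S : Set X) (hS : ¬ S.Countable)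
    (C : Set Y) (hC : C.Countable) (hg : ∀ x ∈ S, g x ∈ C) :
    ∃ y ∈ C, ¬ {x | x ∈ S ∧ g x = y}.Countable := by
  by_contra h
  push_neg at h
  apply hS
  have : S ⊆ ⋃ y ∈ C, {x | x ∈ S ∧ g x = y} := by
    intro x hx
    exact Set.mem_biUnion (hg x hx) ⟨hx, rfl⟩
  exact ((hC.biUnion h).mono this)

lemma unc_diff {X : Type} {A B : Set X} (hA : ¬ A.Countable) (hB : B.Countable) :
    ¬ (A \ B).Countable := by
  intro h
  exact hA (((h.union hB)).mono (by intro x hx; by_cases hxb : x ∈ B <;> simp [hx, hxb]))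

lemma unc_image {X Y : Type} (g : X → Y) {S : Set X} (hinj : Set.InjOn g S)
    (hS : ¬ S.Countable) : ¬ (g '' S).Countable := fun h =>
  hS (Set.countable_of_injective_of_countable_image hinj h)

/-- finsets contained in a countable set form a countable set -/
lemma ct_finsets {α : Type} {C : Set α} (hC : C.Countable) :
    {s : Finset α | ↑s ⊆ C}.Countable := by
  have h1 := (Set.countable_setOf_finite_subset hC).preimage
    (f := fun (s : Finset α) => (↑s : Set α)) (Finset.coe_injective)
  exact h1.mono (by intro s hs; exact ⟨Finset.finite_toSet s, hs⟩)

/-- Key pressing-down-type lemma via an ω-chain: for any finite-set mapping `B`,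
some bound `γ` works on an uncountable set. -/
lemma lemC (B : Omega1 → Finset Omega1) :
    ∃ γ : Omega1, ¬ {δ : Omega1 | ∀ x ∈ B δ, x < δ → x < γ}.Countable := by
  by_contra h
  push_neg at h
  -- next: strict upper bound of S_γ ∪ {γ}
  have hnext : ∀ γ : Omega1, ∃ β : Omega1,
      γ < β ∧ ∀ δ ∈ {δ : Omega1 | ∀ x ∈ B δ, x < δ → x < γ}, δ < β := by
    intro γ
    obtain ⟨β, hβ⟩ := bddO (((h γ).union (countable_singleton γ)))
    exact ⟨β, hβ γ (Or.inr rfl), fun δ hδ => hβ δ (Or.inl hδ)⟩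
  let next : Omega1 → Omega1 := fun γ => (hnext γ).choose
  have hnext1 : ∀ γ, γ < next γ := fun γ => (hnext γ).choose_spec.1
  have hnext2 : ∀ γ δ, (∀ x ∈ B δ, x < δ → x < γ) → δ < next γ :=
    fun γ δ hδ => (hnext γ).choose_spec.2 δ hδ
  let dseq : ℕ → Omega1 := fun n => next^[n] (Classical.arbitrary Omega1)
  have hdseq : ∀ n, dseq n < dseq (n+1) := by
    intro n
    have : dseq (n+1) = next (dseq n) := Function.iterate_succ_apply' _ _ _
    rw [this]; exact hnext1 _
  have hmono : StrictMono dseq := strictMono_nat_of_lt_succ hdseq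
  -- least strict upper bound
  obtain ⟨m, hm, hmin⟩ := minO {β | ∀ n, dseq n < β}
    (by obtain ⟨β, hβ⟩ := bddO (countable_range dseq); exact ⟨β, fun n => hβ _ ⟨n, rfl⟩⟩)
  -- every x < m is below some dseq n
  have hx : ∀ x, x < m → ∃ n, x < dseq n := by
    intro x hxm
    by_contra hc
    push_neg at hc
    exact hmin x (fun n => lt_of_lt_of_le (hdseq n) (hc (n+1))) hxm
  -- get uniform N
  have : ∃ N, ∀ x ∈ B m, x < m → x < dseq N := by
    classical
    let F := (B m).filter (fun x => x < m)
    have hchoice : ∀ x ∈ F, ∃ n, x < dseq n := by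
      intro x hxF
      exact hx x (Finset.mem_filter.1 hxF).2
    refine ⟨(F.sup fun x => if h : ∃ n, x < dseq n then h.choose else 0), ?_⟩
    intro x hxB hxm
    have hxF : x ∈ F := Finset.mem_filter.2 ⟨hxB, hxm⟩
    obtain ⟨n, hn⟩ := hchoice x hxF
    have : x < dseq ((⟨n, hn⟩ : ∃ n, x < dseq n).choose) := (⟨n, hn⟩ : ∃ n, x < dseq n).choose_spec
    calc x < dseq (⟨n, hn⟩ : ∃ n, x < dseq n).choose := this
    _ ≤ _ := by
        apply hmono.monotone
        have := Finset.le_sup (f := fun x => if h : ∃ n, x < dseq n then h.choose else 0) hxF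
        simpa [dif_pos (⟨n, hn⟩ : ∃ n, x < dseq n)] using this
  obtain ⟨N, hN⟩ := this
  have h1 : m < next (dseq N) := hnext2 _ _ hN
  have h2 : dseq (N+1) < m := hm (N+1)
  have h3 : dseq (N+1) = next (dseq N) := Function.iterate_succ_apply' _ _ _
  rw [h3] at h2
  exact absurd (h1.trans h2) (lt_irrefl m)

/-- an uncountable subset of `ω₁` has a strictly monotone enumeration -/
lemma enumUnc {M : Set Omega1} (hM : ¬ M.Countable) :
    ∃ σ : Omega1 → Omega1, StrictMono σ ∧ ∀ ι, σ ι ∈ M := by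
  haveI : IsWellOrder M (fun a b => a < b) := isWellOrder_lt
  have hle : Ordinal.type (fun (a b : M) => a < b) ≤ Ordinal.type (fun (a b : Omega1) => a < b) := by
    rw [Ordinal.type_le_iff']
    exact ⟨⟨⟨Subtype.val, Subtype.val_injective⟩, Iff.rfl⟩⟩
  have hcard : (Ordinal.type (fun (a b : M) => a < b)).card = #M := by
    rw [Ordinal.card_type]
  have heq : Ordinal.type (fun (a b : M) => a < b) = Ordinal.type (fun (a b : Omega1) => a < b) := by
    rcases lt_or_eq_of_le hle with h | h
    · exfalso
      apply hM
      rw [countable_iff_lt_aleph_one, ← hcard, ← Cardinal.lt_ord, Cardinal.ord_aleph]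
      have : Ordinal.type (fun (a b : Omega1) => a < b) = Ordinal.omega 1 := Ordinal.type_toType _
      rwa [this] at h
    · exact h
  obtain ⟨g⟩ := Ordinal.type_eq.1 heq.symm
  refine ⟨fun ι => (g ι : Omega1), ?_, fun ι => (g ι).2⟩
  intro a b hab
  exact g.map_rel_iff.2 hab

lemma le_sm {σ : Omega1 → Omega1} (h : StrictMono σ) (ι : Omega1) : ι ≤ σ ι :=
  StrictMono.le_apply h

/-- A condition of the poset `ℚ(p,c)`: a triple `(a, f, w)` where `a` is a finite
subset of `ω₁`, `f : a → ω` (modelled as a total function, only its restriction to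
`a` is relevant), and `w` is a function from a finite subset `wdom` of `ω × ω` to `ω`
(modelled likewise), such that whenever `α < β` in `a` and `f(α) = f(β)`, we have
`(f(α), p(α,β)) ∈ wdom` and `c(α,β) = w(f(α), p(α,β))`. -/
structure QCond (p c : Omega1 → Omega1 → ℕ) where
  a : Finset Omega1
  f : Omega1 → ℕ
  wdom : Finset (ℕ × ℕ)
  w : ℕ × ℕ → ℕ
  compat : ∀ α ∈ a, ∀ β ∈ a, α < β → f α = f β →
    (f α, p α β) ∈ wdom ∧ c α β = w (f α, p α β)

/-- The extension order of `ℚ(p,c)`: `q' ≤ q` iff `a_q ⊆ a_{q'}`, `f_{q'}` extends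
`f_q`, and `w_{q'}` extends `w_q`. -/
def QLe {p c : Omega1 → Omega1 → ℕ} (q' q : QCond p c) : Prop :=
  q.a ⊆ q'.a ∧ (∀ α ∈ q.a, q'.f α = q.f α) ∧
    q.wdom ⊆ q'.wdom ∧ ∀ x ∈ q.wdom, q'.w x = q.w x

/-- Two conditions are compatible iff they have a common extension. -/
def QCompatible {p c : Omega1 → Omega1 → ℕ} (q q' : QCond p c) : Prop :=
  ∃ r : QCond p c, QLe r q ∧ QLe r q'


lemma QLe.refl {p c : Omega1 → Omega1 → ℕ} (q : QCond p c) : QLe q q :=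
  ⟨Finset.Subset.refl _, fun _ _ => rfl, Finset.Subset.refl _, fun _ _ => rfl⟩

lemma QCompatible.symm {p c : Omega1 → Omega1 → ℕ} {q q' : QCond p c}
    (h : QCompatible q q') : QCompatible q' q := by
  obtain ⟨r, h1, h2⟩ := h; exact ⟨r, h2, h1⟩

/-- The main construction: under suitable separation/avoidance hypotheses,
two conditions are compatible. -/
lemma buildExt {p c : Omega1 → Omega1 → ℕ} (q q' : QCond p c) (W : Finset (ℕ × ℕ))
    (hw : q.wdom = W) (hw' : q'.wdom = W) (hww : ∀ x ∈ W, q.w x = q'.w x)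
    (hfR : ∀ α ∈ q.a, α ∈ q'.a → q.f α = q'.f α)
    (h3 : ∀ α ∈ q.a \ q'.a, ∀ β ∈ q'.a \ q.a, α < β)
    (h5 : ∀ α ∈ q.a \ q'.a, ∀ β ∈ q'.a \ q.a, ∀ n : ℕ, (n, p α β) ∉ W)
    (h6 : ∀ α ∈ q.a \ q'.a, ∀ α' ∈ q.a \ q'.a, ∀ β ∈ q'.a \ q.a, ∀ β' ∈ q'.a \ q.a,
      p α β = p α' β' → α = α' ∧ β = β') :
    QCompatible q q' := by
  classical
  set t : Finset Omega1 := q.a \ q'.a with ht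
  set t' : Finset Omega1 := q'.a \ q.a with ht'
  set fr : Omega1 → ℕ := fun α => if α ∈ q.a then q.f α else q'.f α with hfr
  set keyF : Omega1 × Omega1 → ℕ × ℕ := fun x => (fr x.1, p x.1 x.2) with hkeyF
  set rect : Finset (Omega1 × Omega1) := t ×ˢ t' with hrect
  set NK : Finset (ℕ × ℕ) := rect.image keyF with hNK
  set wr : ℕ × ℕ → ℕ :=
    fun k => if h : ∃ x, x ∈ rect ∧ keyF x = k then c h.choose.1 h.choose.2 else q.w k with hwr
  have hrectmem : ∀ x : Omega1 × Omega1, x ∈ rect ↔ x.1 ∈ t ∧ x.2 ∈ t' := by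
    intro x; rw [hrect, Finset.mem_product]
  have hf_q : ∀ α ∈ q.a, fr α = q.f α := fun α hα => if_pos hα
  have hf_q' : ∀ α ∈ q'.a, fr α = q'.f α := by
    intro α hα
    by_cases hq : α ∈ q.a
    · rw [hfr]; simp only [if_pos hq]; exact hfR α hq hα
    · exact if_neg hq
  have hkey_not : ∀ k ∈ W, ¬ ∃ x, x ∈ rect ∧ keyF x = k := by
    rintro k hk ⟨x, hx, hkx⟩
    have := (hrectmem x).1 hx
    exact h5 x.1 this.1 x.2 this.2 (fr x.1) (show keyF x ∈ W from hkx ▸ hk)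
  have hwr_W : ∀ k ∈ W, wr k = q.w k := fun k hk => dif_neg (hkey_not k hk)
  have hwr_new : ∀ α ∈ t, ∀ β ∈ t', wr (keyF (α, β)) = c α β := by
    intro α hα β hβ
    have hex : ∃ x, x ∈ rect ∧ keyF x = keyF (α, β) :=
      ⟨(α, β), (hrectmem _).2 ⟨hα, hβ⟩, rfl⟩
    rw [hwr]
    simp only [dif_pos hex]
    obtain ⟨hx, hkx⟩ := hex.choose_spec
    have hxm := (hrectmem _).1 hx
    have hp : p hex.choose.1 hex.choose.2 = p α β := congrArg Prod.snd hkx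
    obtain ⟨h1, h2⟩ := h6 _ hxm.1 _ hα _ hxm.2 _ hβ hp
    rw [h1, h2]
  -- the common extension
  refine ⟨⟨q.a ∪ q'.a, fr, W ∪ NK, wr, ?_⟩, ?_, ?_⟩
  · -- compat
    intro α hα β hβ hlt hf
    simp only [Finset.mem_union] at hα hβ
    have case_q : α ∈ q.a → β ∈ q.a → (fr α, p α β) ∈ W ∪ NK ∧ c α β = wr (fr α, p α β) := by
      intro h1 h2
      have := q.compat α h1 β h2 hlt (by rw [← hf_q α h1, ← hf_q β h2]; exact hf)
      rw [← hw]
      refine ⟨Finset.mem_union_left _ (by rw [hf_q α h1]; exact (hw ▸ this.1)), ?_⟩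
      rw [hf_q α h1, this.2]
      exact (hwr_W _ (hw ▸ this.1)).symm
    have case_q' : α ∈ q'.a → β ∈ q'.a → (fr α, p α β) ∈ W ∪ NK ∧ c α β = wr (fr α, p α β) := by
      intro h1 h2
      have := q'.compat α h1 β h2 hlt (by rw [← hf_q' α h1, ← hf_q' β h2]; exact hf)
      have hkW : (fr α, p α β) ∈ W := by rw [hf_q' α h1]; exact (hw' ▸ this.1)
      refine ⟨Finset.mem_union_left _ hkW, ?_⟩
      rw [hwr_W _ hkW, hww _ hkW, hf_q' α h1]
      exact this.2
    by_cases hαq : α ∈ q.a <;> by_cases hβq : β ∈ q.a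
    · exact case_q hαq hβq
    · -- β ∈ q'.a \ q.a
      have hβt' : β ∈ t' := by rw [ht']; exact Finset.mem_sdiff.2 ⟨hβ.resolve_left hβq, hβq⟩
      by_cases hαq' : α ∈ q'.a
      · exact case_q' hαq' (hβ.resolve_left hβq)
      · have hαt : α ∈ t := by rw [ht]; exact Finset.mem_sdiff.2 ⟨hαq, hαq'⟩
        constructor
        · exact Finset.mem_union_right _
            (Finset.mem_image.2 ⟨(α, β), (hrectmem _).2 ⟨hαt, hβt'⟩, rfl⟩)
        · exact (hwr_new α hαt β hβt').symm
    · -- α ∈ q'.a \ q.a, β ∈ q.a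
      have hαt' : α ∈ t' := by rw [ht']; exact Finset.mem_sdiff.2 ⟨hα.resolve_left hαq, hαq⟩
      by_cases hβq' : β ∈ q'.a
      · exact case_q' (hα.resolve_left hαq) hβq'
      · have hβt : β ∈ t := by rw [ht]; exact Finset.mem_sdiff.2 ⟨hβq, hβq'⟩
        exact absurd hlt (asymm (h3 β hβt α hαt'))
    · exact case_q' (hα.resolve_left hαq) (hβ.resolve_left hβq)
  · -- QLe r q
    refine ⟨Finset.subset_union_left, hf_q, ?_, ?_⟩
    · show q.wdom ⊆ W ∪ NK
      rw [hw]; exact Finset.subset_union_left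
    · intro x hx
      show wr x = q.w x
      exact hwr_W x (hw ▸ hx)
  · -- QLe r q'
    refine ⟨Finset.subset_union_right, hf_q', ?_, ?_⟩
    · show q'.wdom ⊆ W ∪ NK
      rw [hw']; exact Finset.subset_union_left
    · intro x hx
      show wr x = q'.w x
      rw [hwr_W x (hw' ▸ hx)]
      exact hww x (hw' ▸ hx)

/-- the "bad values" set attached to a condition with tail `t'` -/
def BadN (p : Omega1 → Omega1 → ℕ) (W : Finset (ℕ × ℕ)) (t' : Finset Omega1) : Set ℕ :=
  ↑(W.image Prod.snd) ∪
    {n | ∃ β ∈ t', ∃ β' ∈ t', β < β' ∧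
      (∃ α : Omega1, α < β ∧ p α β = n) ∧ (∃ α : Omega1, α < β ∧ p α β' = n)}

lemma badNFinite (p : Omega1 → Omega1 → ℕ)
    (had : ∀ β β' : Omega1, β < β' →
      ({n : ℕ | ∃ α : Omega1, α < β ∧ p α β = n} ∩
        {n : ℕ | ∃ α : Omega1, α < β ∧ p α β' = n}).Finite)
    (W : Finset (ℕ × ℕ)) (t' : Finset Omega1) : (BadN p W t').Finite := by
  refine Set.Finite.union (Finset.finite_toSet _) ?_
  have hsub : {n | ∃ β ∈ t', ∃ β' ∈ t', β < β' ∧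
      (∃ α : Omega1, α < β ∧ p α β = n) ∧ (∃ α : Omega1, α < β ∧ p α β' = n)} ⊆
      ⋃ β ∈ (↑t' : Set Omega1), ⋃ β' ∈ (↑t' : Set Omega1),
        {n | β < β' ∧ (∃ α : Omega1, α < β ∧ p α β = n) ∧ (∃ α : Omega1, α < β ∧ p α β' = n)} := by
    rintro n ⟨β, hβ, β', hβ', h⟩
    exact Set.mem_biUnion hβ (Set.mem_biUnion hβ' h)
  refine Set.Finite.subset ?_ hsub
  refine Set.Finite.biUnion (Finset.finite_toSet _) (fun β _ => ?_)
  refine Set.Finite.biUnion (Finset.finite_toSet _) (fun β' _ => ?_)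
  by_cases hlt : β < β'
  · refine (had β β' hlt).subset ?_
    rintro n ⟨_, h1, h2⟩
    exact ⟨h1, h2⟩
  · refine Set.Finite.subset (Set.finite_empty) ?_
    rintro n ⟨h, _⟩
    exact absurd h hlt

/-- the set of "bad lower ordinals" for a condition with tail `t'` above `δ'` -/
def BadOrds (p : Omega1 → Omega1 → ℕ) (W : Finset (ℕ × ℕ)) (δ' : Omega1)
    (t' : Finset Omega1) : Set Omega1 :=
  {α | α < δ' ∧ ∃ β ∈ t', p α β ∈ BadN p W t'}

lemma badOrdsFinite (p : Omega1 → Omega1 → ℕ)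
    (hinj : ∀ α α' β : Omega1, α < α' → α' < β → p α β ≠ p α' β)
    (had : ∀ β β' : Omega1, β < β' →
      ({n : ℕ | ∃ α : Omega1, α < β ∧ p α β = n} ∩
        {n : ℕ | ∃ α : Omega1, α < β ∧ p α β' = n}).Finite)
    (W : Finset (ℕ × ℕ)) (δ' : Omega1) (t' : Finset Omega1)
    (ht' : ∀ β ∈ t', δ' ≤ β) : (BadOrds p W δ' t').Finite := by
  have hsub : BadOrds p W δ' t' ⊆
      ⋃ β ∈ (↑t' : Set Omega1), {α | α < δ' ∧ p α β ∈ BadN p W t'} := by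
    rintro α ⟨hα, β, hβ, hp⟩
    exact Set.mem_biUnion hβ ⟨hα, hp⟩
  refine Set.Finite.subset ?_ hsub
  refine Set.Finite.biUnion (Finset.finite_toSet _) (fun β hβ => ?_)
  have himg : ((fun α => p α β) '' {α | α < δ' ∧ p α β ∈ BadN p W t'}).Finite := by
    refine (badNFinite p had W t').subset ?_
    rintro n ⟨α, ⟨_, hp⟩, rfl⟩
    exact hp
  refine Set.Finite.of_finite_image himg ?_
  rintro α₁ ⟨h1, _⟩ α₂ ⟨h2, _⟩ hp
  by_contra hne
  rcases lt_or_gt_of_ne hne with h | h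
  · exact hinj α₁ α₂ β h (lt_of_lt_of_le h2 (ht' β hβ)) hp
  · exact hinj α₂ α₁ β h (lt_of_lt_of_le h1 (ht' β hβ)) hp.symm

lemma unc_image_fibers {X Y : Type} (g : X → Y) (S : Set X) (hS : ¬ S.Countable)
    (h : ∀ y, {x | x ∈ S ∧ g x = y}.Countable) : ¬ (g '' S).Countable := by
  intro hct
  apply hS
  have : S ⊆ ⋃ y ∈ g '' S, {x | x ∈ S ∧ g x = y} := by
    intro x hx
    exact Set.mem_biUnion (Set.mem_image_of_mem g hx) ⟨hx, rfl⟩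
  exact ((hct.biUnion (fun y _ => h y)).mono this)

lemma embUnc {γ : Type} {X : Set γ} (hX : ¬ X.Countable) :
    ∃ e : Omega1 → γ, Function.Injective e ∧ ∀ ι, e ι ∈ X := by
  have h1 : aleph 1 ≤ #X := by
    rw [countable_iff_lt_aleph_one] at hX
    exact not_lt.1 hX
  rw [← mkO, Cardinal.le_def] at h1
  obtain ⟨f⟩ := h1
  exact ⟨fun ι => (f ι : γ), fun a b hab => f.injective (Subtype.ext hab), fun ι => (f ι).2⟩

/-- unboundedness of the set of `ν`-closed ordinals -/
lemma Dunb (ν : Omega1 → Omega1) (β : Omega1) :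
    ∃ γ : Omega1, β < γ ∧ ∀ x, x < γ → ν x < γ := by
  have hnext : ∀ γ : Omega1, ∃ β' : Omega1, γ < β' ∧ ∀ x ≤ γ, ν x < β' := by
    intro γ
    obtain ⟨β', hβ'⟩ := bddO (((ctIic γ).image ν).union (countable_singleton γ))
    exact ⟨β', hβ' γ (Or.inr rfl), fun x hx => hβ' _ (Or.inl ⟨x, hx, rfl⟩)⟩
  let next : Omega1 → Omega1 := fun γ => (hnext γ).choose
  have hn1 : ∀ γ, γ < next γ := fun γ => (hnext γ).choose_spec.1
  have hn2 : ∀ γ x, x ≤ γ → ν x < next γ := fun γ => (hnext γ).choose_spec.2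
  obtain ⟨β1, hβ1⟩ := exists_gtO β
  let dseq : ℕ → Omega1 := fun n => next^[n] β1
  have hds : ∀ n, dseq (n+1) = next (dseq n) := fun n => Function.iterate_succ_apply' _ _ _
  have hdseq : ∀ n, dseq n < dseq (n+1) := fun n => (hds n) ▸ hn1 (dseq n)
  have hmono : StrictMono dseq := strictMono_nat_of_lt_succ hdseq
  obtain ⟨m, hm, hmin⟩ := minO {γ | ∀ n, dseq n < γ}
    (by obtain ⟨γ, hγ⟩ := bddO (countable_range dseq); exact ⟨γ, fun n => hγ _ ⟨n, rfl⟩⟩)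
  refine ⟨m, lt_trans hβ1 ((show dseq 0 = β1 from rfl) ▸ hm 0), ?_⟩
  intro x hx
  have : ∃ n, x ≤ dseq n := by
    by_contra hc
    push_neg at hc
    exact hmin x (fun n => hc n) hx
  obtain ⟨n, hn⟩ := this
  calc ν x < next (dseq n) := hn2 _ _ hn
  _ = dseq (n+1) := (hds n).symm
  _ < m := hm _

/-- If `p` has injective and almost-disjoint fibers then, for any coloring `c`, the
poset `ℚ(p,c)` has Property K: every uncountable set of conditions has an uncountable
pairwise compatible subset. -/
theorem statement14 (p c : Omega1 → Omega1 → ℕ)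
    (hinj : ∀ α α' β : Omega1, α < α' → α' < β → p α β ≠ p α' β)
    (had : ∀ β β' : Omega1, β < β' →
      ({n : ℕ | ∃ α : Omega1, α < β ∧ p α β = n} ∩
        {n : ℕ | ∃ α : Omega1, α < β ∧ p α β' = n}).Finite) :
    ∀ S : Set (QCond p c), ¬ S.Countable →
      ∃ T ⊆ S, ¬ T.Countable ∧ ∀ q ∈ T, ∀ q' ∈ T, QCompatible q q' := by
  classical
  intro S hS
  -- a default condition
  have hq0 : Nonempty (QCond p c) :=
    ⟨⟨∅, fun _ => 0, ∅, fun _ => 0, by intro α hα; simp at hα⟩⟩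
  -- Step A : fix the w-data
  set gw : QCond p c → (Finset (ℕ × ℕ) × Finset ((ℕ × ℕ) × ℕ)) :=
    fun q => (q.wdom, q.wdom.image (fun x => (x, q.w x))) with hgw
  obtain ⟨⟨W, WP⟩, -, hS₀⟩ := exists_unc_fiber gw S hS Set.univ Set.countable_univ
    (fun _ _ => Set.mem_univ _)
  set S₀ : Set (QCond p c) := {q | q ∈ S ∧ gw q = (W, WP)} with hS₀def
  have hWdom : ∀ q ∈ S₀, q.wdom = W := by
    intro q hq
    exact congrArg Prod.fst hq.2
  have hWw : ∀ q ∈ S₀, ∀ q' ∈ S₀, ∀ x ∈ W, q.w x = q'.w x := by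
    intro q hq q' hq' x hx
    have h1 : q.wdom.image (fun x => (x, q.w x)) = WP := congrArg Prod.snd hq.2
    have h2 : q'.wdom.image (fun x => (x, q'.w x)) = WP := congrArg Prod.snd hq'.2
    have hxq : (x, q.w x) ∈ WP := by
      rw [← h1]; exact Finset.mem_image.2 ⟨x, hWdom q hq ▸ hx, rfl⟩
    rw [← h2] at hxq
    obtain ⟨y, _, hy⟩ := Finset.mem_image.1 hxq
    obtain ⟨hy1, hy2⟩ := Prod.ext_iff.1 hy
    exact hy2.symm.trans (congrArg q'.w hy1)
  -- essential data map
  set gE : QCond p c → (Finset Omega1 × Finset (Omega1 × ℕ)) :=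
    fun q => (q.a, q.a.image (fun α => (α, q.f α))) with hgE
  have hgEa : ∀ q, (gE q).1 = q.a := fun q => rfl
  -- f-agreement from equal essential data
  have fagree : ∀ q q' : QCond p c, gE q = gE q' → ∀ α ∈ q'.a, q.f α = q'.f α := by
    intro q q' h α hα
    have ha : q.a = q'.a := congrArg Prod.fst h
    have h2 : q.a.image (fun α => (α, q.f α)) = q'.a.image (fun α => (α, q'.f α)) :=
      congrArg Prod.snd h
    have hm : (α, q'.f α) ∈ q.a.image (fun α => (α, q.f α)) := by
      rw [h2]; exact Finset.mem_image.2 ⟨α, hα, rfl⟩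
    obtain ⟨β, _, hβ⟩ := Finset.mem_image.1 hm
    obtain ⟨hb1, hb2⟩ := Prod.ext_iff.1 hβ
    exact (congrArg q.f hb1).symm.trans hb2
  by_cases hA : ∃ v, ¬ {q | q ∈ S₀ ∧ gE q = v}.Countable
  · -- degenerate case : uncountably many conditions with the same essential data
    obtain ⟨v, hv⟩ := hA
    refine ⟨{q | q ∈ S₀ ∧ gE q = v}, fun q hq => hq.1.1, hv, ?_⟩
    intro q hq q' hq'
    have hgeq : gE q = gE q' := hq.2.trans hq'.2.symm
    have ha : q.a = q'.a := congrArg Prod.fst hgeq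
    refine ⟨q, QLe.refl q, ?_⟩
    refine ⟨ha ▸ Finset.Subset.refl _, fagree q q' hgeq, ?_, ?_⟩
    · rw [hWdom q' hq'.1, hWdom q hq.1]
    · intro x hx
      exact hWw q hq.1 q' hq'.1 x (hWdom q' hq'.1 ▸ hx)
  · -- main case
    push_neg at hA
    have h𝒱 : ¬ (gE '' S₀).Countable := unc_image_fibers gE S₀ hS₀ hA
    -- section of gE
    set qa : (Finset Omega1 × Finset (Omega1 × ℕ)) → QCond p c :=
      fun v => if h : ∃ q, q ∈ S₀ ∧ gE q = v then h.choose else Classical.arbitrary _ with hqadef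
    have hqa : ∀ v ∈ gE '' S₀, qa v ∈ S₀ ∧ gE (qa v) = v := by
      rintro v ⟨q, hq, rfl⟩
      have h : ∃ q', q' ∈ S₀ ∧ gE q' = gE q := ⟨q, hq, rfl⟩
      rw [hqadef]
      simp only [dif_pos h]
      exact h.choose_spec
    obtain ⟨e, he_inj, he_mem⟩ := embUnc h𝒱
    -- Step D : the root bound
    obtain ⟨γ₀, hU₁⟩ := lemC (fun δ => (e δ).1)
    set U₁ : Set Omega1 := {δ | ∀ x ∈ (e δ).1, x < δ → x < γ₀} with hU₁def
    -- Step E : constant root data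
    set g₂ : Omega1 → (Finset Omega1 × Finset (Omega1 × ℕ)) :=
      fun δ => ((e δ).1.filter (fun x => x < γ₀), (e δ).2.filter (fun z => z.1 < γ₀)) with hg₂
    have hC₂ : ({s : Finset Omega1 | ↑s ⊆ Set.Iio γ₀} ×ˢ
        {s : Finset (Omega1 × ℕ) | ↑s ⊆ (Set.Iio γ₀) ×ˢ (Set.univ : Set ℕ)}).Countable :=
      Set.Countable.prod (ct_finsets (ctIio γ₀))
        (ct_finsets ((ctIio γ₀).prod Set.countable_univ))
    obtain ⟨⟨R, FR⟩, -, hU₂⟩ := exists_unc_fiber g₂ U₁ hU₁ _ hC₂ (by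
      intro δ _
      constructor
      · intro x hx
        exact (Finset.mem_filter.1 hx).2
      · rintro ⟨x, n⟩ hx
        exact ⟨(Finset.mem_filter.1 hx).2, Set.mem_univ _⟩)
    set U₂ : Set Omega1 := {δ | δ ∈ U₁ ∧ g₂ δ = (R, FR)} with hU₂def
    -- Step F : go above γ₀ and discard empty tails
    have hctR : {δ : Omega1 | (e δ).1 = R}.Countable := by
      refine Set.MapsTo.countable_of_injOn (f := fun δ => (e δ).2)
        (t := {s : Finset (Omega1 × ℕ) | ↑s ⊆ (↑R : Set Omega1) ×ˢ (Set.univ : Set ℕ)}) ?_ ?_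
        (ct_finsets ((R.finite_toSet.countable).prod Set.countable_univ))
      · intro δ hδ
        obtain ⟨hqa1, hqa2⟩ := hqa (e δ) (he_mem δ)
        have h2 : (qa (e δ)).a.image (fun α => (α, (qa (e δ)).f α)) = (e δ).2 :=
          congrArg Prod.snd hqa2
        have h1 : (qa (e δ)).a = (e δ).1 := congrArg Prod.fst hqa2
        rintro ⟨x, n⟩ hx
        have hx' : (x, n) ∈ (e δ).2 := hx
        rw [← h2] at hx'
        obtain ⟨β, hβ, hβ2⟩ := Finset.mem_image.1 hx'
        have hb1 : β = x := (Prod.ext_iff.1 hβ2).1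
        have hδ' : (e δ).1 = R := hδ
        refine ⟨?_, Set.mem_univ _⟩
        have hβR : β ∈ R := by rw [← hδ', ← h1]; exact hβ
        show x ∈ (↑R : Set Omega1)
        rw [← hb1]
        exact_mod_cast hβR
      · intro δ hδ δ' hδ' heq
        apply he_inj
        exact Prod.ext (hδ.trans hδ'.symm) heq
    set U₃ : Set Omega1 := U₂ \ (Set.Iic γ₀ ∪ {δ | (e δ).1 = R}) with hU₃def
    have hU₃ : ¬ U₃.Countable := unc_diff hU₂ ((ctIic γ₀).union hctR)
    set t : Omega1 → Finset Omega1 := fun δ => (e δ).1.filter (fun x => ¬ x < γ₀) with htdef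
    have hsplit : ∀ δ ∈ U₂, R ∪ t δ = (e δ).1 := by
      intro δ hδ
      have h1 : (e δ).1.filter (fun x => x < γ₀) = R := congrArg Prod.fst hδ.2
      rw [← h1, htdef]
      exact Finset.filter_union_filter_not_eq _ _
    have hRmem : ∀ δ ∈ U₂, ∀ x ∈ R, x < γ₀ := by
      intro δ hδ x hx
      have h1 : (e δ).1.filter (fun x => x < γ₀) = R := congrArg Prod.fst hδ.2
      rw [← h1] at hx
      exact (Finset.mem_filter.1 hx).2
    have htmem : ∀ δ ∈ U₃, ∀ x ∈ t δ, δ ≤ x := by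
      intro δ hδ x hx
      have hx1 := Finset.mem_filter.1 hx
      by_contra hc
      push_neg at hc
      exact hx1.2 (hδ.1.1 x hx1.1 hc)
    have htne : ∀ δ ∈ U₃, (t δ).Nonempty := by
      intro δ hδ
      rw [Finset.nonempty_iff_ne_empty]
      intro hemp
      apply hδ.2
      refine Or.inr ?_
      have := hsplit δ hδ.1
      rw [hemp, Finset.union_empty] at this
      exact this.symm
    -- Step G : separation machinery
    set ν : Omega1 → Omega1 := fun δ => if h : (t δ).Nonempty then (t δ).max' h else δ
      with hνdef
    have hνt : ∀ δ ∈ U₃, ∀ x ∈ t δ, x ≤ ν δ := by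
      intro δ hδ x hx
      rw [hνdef]
      simp only [dif_pos (htne δ hδ)]
      exact Finset.le_max' _ _ hx
    have hηex : ∀ δ : Omega1, ∃ m, (δ < m ∧ ∀ x, x < m → ν x < m) ∧
        ∀ γ, (δ < γ ∧ ∀ x, x < γ → ν x < γ) → ¬ γ < m := by
      intro δ
      obtain ⟨m, hm, hmin⟩ := minO {γ | δ < γ ∧ ∀ x, x < γ → ν x < γ}
        (by obtain ⟨γ, h1, h2⟩ := Dunb ν δ; exact ⟨γ, h1, h2⟩)
      exact ⟨m, hm, hmin⟩
    choose η hη using hηex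
    have hη1 : ∀ δ, δ < η δ := fun δ => (hη δ).1.1
    have hη2 : ∀ δ x, x < η δ → ν x < η δ := fun δ => (hη δ).1.2
    have hηmin : ∀ δ γ, (δ < γ ∧ ∀ x, x < γ → ν x < γ) → ¬ γ < η δ := fun δ => (hη δ).2
    have hηI : ¬ (η '' U₃).Countable := unc_image_fibers η U₃ hU₃ (fun γ =>
      (ctIio γ).mono (by rintro x ⟨_, rfl⟩; exact hη1 x))
    set sI : Omega1 → Omega1 :=
      fun γ => if h : ∃ δ, δ ∈ U₃ ∧ η δ = γ then h.choose else Classical.arbitrary _ with hsIdef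
    have hsI : ∀ γ ∈ η '' U₃, sI γ ∈ U₃ ∧ η (sI γ) = γ := by
      rintro γ ⟨δ, hδ, rfl⟩
      have h : ∃ δ', δ' ∈ U₃ ∧ η δ' = η δ := ⟨δ, hδ, rfl⟩
      rw [hsIdef]
      simp only [dif_pos h]
      exact h.choose_spec
    set V : Set Omega1 := sI '' (η '' U₃) with hVdef
    have hVsub : V ⊆ U₃ := by rintro x ⟨γ, hγ, rfl⟩; exact (hsI γ hγ).1
    have hVunc : ¬ V.Countable := by
      refine unc_image sI ?_ hηI
      intro γ1 h1 γ2 h2 heq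
      rw [← (hsI γ1 h1).2, ← (hsI γ2 h2).2, heq]
    have hsep : ∀ δ ∈ V, ∀ δ' ∈ V, δ < δ' → ν δ < δ' := by
      rintro δ hδV δ' hδ'V hlt
      obtain ⟨γ1, hγ1, rfl⟩ := hδV
      obtain ⟨γ2, hγ2, rfl⟩ := hδ'V
      have e1 : η (sI γ1) = γ1 := (hsI γ1 hγ1).2
      have e2 : η (sI γ2) = γ2 := (hsI γ2 hγ2).2
      have hνlt : ν (sI γ1) < η (sI γ1) := hη2 (sI γ1) (sI γ1) (hη1 (sI γ1))
      have hle : η (sI γ1) ≤ sI γ2 := by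
        by_contra hc
        push_neg at hc
        have ha1 : ¬ η (sI γ1) < η (sI γ2) :=
          hηmin (sI γ2) (η (sI γ1)) ⟨hc, hη2 (sI γ1)⟩
        have ha2 : ¬ η (sI γ2) < η (sI γ1) :=
          hηmin (sI γ1) (η (sI γ2)) ⟨lt_trans hlt (hη1 (sI γ2)), hη2 (sI γ2)⟩
        have heq2 : η (sI γ1) = η (sI γ2) := le_antisymm (not_lt.1 ha2) (not_lt.1 ha1)
        rw [e1, e2] at heq2
        rw [heq2] at hlt
        exact absurd hlt (lt_irrefl _)
      exact lt_of_lt_of_le hνlt hle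
    -- Step H : final thinning
    obtain ⟨σ, hσmono, hσV⟩ := enumUnc hVunc
    have hBOfin : ∀ ι : Omega1, (BadOrds p W (σ ι) (t (σ ι))).Finite := fun ι =>
      badOrdsFinite p hinj had W (σ ι) (t (σ ι)) (htmem (σ ι) (hVsub (hσV ι)))
    set idx : Omega1 → Omega1 :=
      fun x => if h : ∃ ι, x ∈ t (σ ι) then h.choose else x with hidxdef
    have hidx : ∀ ι : Omega1, ∀ x ∈ t (σ ι), idx x = ι := by
      intro ι x hx
      have h : ∃ ι', x ∈ t (σ ι') := ⟨ι, hx⟩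
      rw [hidxdef]
      simp only [dif_pos h]
      have hι₀ : x ∈ t (σ h.choose) := h.choose_spec
      by_contra hne
      rcases lt_or_gt_of_ne hne with hlt | hlt
      · have h1 := hsep (σ h.choose) (hσV _) (σ ι) (hσV ι) (hσmono hlt)
        have h2 := htmem (σ ι) (hVsub (hσV ι)) x hx
        have h3 := hνt (σ h.choose) (hVsub (hσV _)) x hι₀
        exact absurd (lt_of_le_of_lt (h2.trans h3) h1) (lt_irrefl _)
      · have h1 := hsep (σ ι) (hσV ι) (σ h.choose) (hσV _) (hσmono hlt)
        have h2 := htmem (σ h.choose) (hVsub (hσV _)) x hι₀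
        have h3 := hνt (σ ι) (hVsub (hσV ι)) x hx
        exact absurd (lt_of_le_of_lt (h2.trans h3) h1) (lt_irrefl _)
    obtain ⟨γ₁, hShunc⟩ := lemC (fun ι => (hBOfin ι).toFinset.image idx)
    set Sh : Set Omega1 :=
      {ι | ∀ ξ ∈ (hBOfin ι).toFinset.image idx, ξ < ι → ξ < γ₁} with hShdef
    set J : Set Omega1 := Sh \ Set.Iic γ₁ with hJdef
    have hJ : ¬ J.Countable := unc_diff hShunc (ctIic γ₁)
    -- the chosen conditions
    set Q : Omega1 → QCond p c := fun ι => qa (e (σ ι)) with hQdef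
    have hQS₀ : ∀ ι, Q ι ∈ S₀ := fun ι => (hqa _ (he_mem _)).1
    have hQa : ∀ ι, (Q ι).a = (e (σ ι)).1 := fun ι =>
      congrArg Prod.fst (hqa _ (he_mem (σ ι))).2
    have hQimg : ∀ ι, (Q ι).a.image (fun α => (α, (Q ι).f α)) = (e (σ ι)).2 := fun ι =>
      congrArg Prod.snd (hqa _ (he_mem (σ ι))).2
    have hQaRt : ∀ ι, (Q ι).a = R ∪ t (σ ι) := fun ι =>
      (hQa ι).trans (hsplit (σ ι) (hVsub (hσV ι)).1).symm
    have hγ₀lt : ∀ ι, γ₀ < σ ι := by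
      intro ι
      have h2 := (hVsub (hσV ι)).2
      by_contra hc
      push_neg at hc
      exact h2 (Or.inl hc)
    -- the key compatibility claim
    have key : ∀ ι ι' : Omega1, ι ∈ J → ι' ∈ J → ι < ι' → QCompatible (Q ι) (Q ι') := by
      intro ι ι' hι hι' hlt
      have hδV := hσV ι
      have hδ'V := hσV ι'
      have hδU₃ := hVsub hδV
      have hδ'U₃ := hVsub hδ'V
      have hδδ' : σ ι < σ ι' := hσmono hlt
      have hνsep : ν (σ ι) < σ ι' := hsep _ hδV _ hδ'V hδδ'
      have htd : ∀ α ∈ (Q ι).a \ (Q ι').a, α ∈ t (σ ι) := by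
        intro α hα
        obtain ⟨h1, h2⟩ := Finset.mem_sdiff.1 hα
        rw [hQaRt ι] at h1
        rcases Finset.mem_union.1 h1 with h | h
        · exact absurd (by rw [hQaRt ι']; exact Finset.mem_union_left _ h) h2
        · exact h
      have htd' : ∀ β ∈ (Q ι').a \ (Q ι).a, β ∈ t (σ ι') := by
        intro β hβ
        obtain ⟨h1, h2⟩ := Finset.mem_sdiff.1 hβ
        rw [hQaRt ι'] at h1
        rcases Finset.mem_union.1 h1 with h | h
        · exact absurd (by rw [hQaRt ι]; exact Finset.mem_union_left _ h) h2
        · exact h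
      have htub : ∀ α ∈ t (σ ι), α < σ ι' := fun α hα =>
        lt_of_le_of_lt (hνt (σ ι) hδU₃ α hα) hνsep
      have htlb' : ∀ β ∈ t (σ ι'), σ ι' ≤ β := htmem (σ ι') hδ'U₃
      have K4 : ∀ α ∈ t (σ ι), ∀ β ∈ t (σ ι'), p α β ∉ BadN p W (t (σ ι')) := by
        intro α hα β hβ hbad
        have hαBO : α ∈ BadOrds p W (σ ι') (t (σ ι')) := ⟨htub α hα, β, hβ, hbad⟩
        have hmem : ι ∈ (hBOfin ι').toFinset.image idx := by
          refine Finset.mem_image.2 ⟨α, ?_, hidx ι α hα⟩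
          rw [Set.Finite.mem_toFinset]
          exact hαBO
        have hcon := hι'.1 ι hmem hlt
        have hγι : γ₁ < ι := not_le.1 (fun hcc => hι.2 hcc)
        exact absurd hcon (lt_asymm hγι)
      have hfR : ∀ α ∈ (Q ι).a, α ∈ (Q ι').a → (Q ι).f α = (Q ι').f α := by
        intro α h1 h2
        have hαR : α ∈ R := by
          rw [hQaRt ι] at h1
          rcases Finset.mem_union.1 h1 with h | h
          · exact h
          · exfalso
            rw [hQaRt ι'] at h2
            rcases Finset.mem_union.1 h2 with h' | h'
            · have ha := hRmem (σ ι') hδ'U₃.1 α h'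
              have hb := htmem (σ ι) hδU₃ α h
              exact absurd ha (not_lt.2 (le_trans (hγ₀lt ι).le hb))
            · exact absurd (htub α h) (not_lt.2 (htlb' α h'))
        have hf1 : (e (σ ι)).2.filter (fun z => z.1 < γ₀) = FR :=
          congrArg Prod.snd hδU₃.1.2
        have hf2 : (e (σ ι')).2.filter (fun z => z.1 < γ₀) = FR :=
          congrArg Prod.snd hδ'U₃.1.2
        have hαγ₀ : α < γ₀ := hRmem (σ ι) hδU₃.1 α hαR
        have hm1 : (α, (Q ι).f α) ∈ FR := by
          rw [← hf1]
          refine Finset.mem_filter.2 ⟨?_, hαγ₀⟩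
          rw [← hQimg ι]
          exact Finset.mem_image.2 ⟨α, h1, rfl⟩
        rw [← hf2] at hm1
        have hm1' := (Finset.mem_filter.1 hm1).1
        rw [← hQimg ι'] at hm1'
        obtain ⟨β, _, hβ2⟩ := Finset.mem_image.1 hm1'
        obtain ⟨hb1, hb2⟩ := Prod.ext_iff.1 hβ2
        exact hb2.symm.trans (congrArg (Q ι').f hb1)
      have h3 : ∀ α ∈ (Q ι).a \ (Q ι').a, ∀ β ∈ (Q ι').a \ (Q ι).a, α < β := by
        intro α hα β hβ
        exact lt_of_lt_of_le (htub α (htd α hα)) (htlb' β (htd' β hβ))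
      have h5 : ∀ α ∈ (Q ι).a \ (Q ι').a, ∀ β ∈ (Q ι').a \ (Q ι).a,
          ∀ n : ℕ, (n, p α β) ∉ W := by
        intro α hα β hβ n hn
        apply K4 α (htd α hα) β (htd' β hβ)
        exact Or.inl (by exact_mod_cast Finset.mem_image.2 ⟨(n, p α β), hn, rfl⟩)
      have h6 : ∀ α ∈ (Q ι).a \ (Q ι').a, ∀ α' ∈ (Q ι).a \ (Q ι').a,
          ∀ β ∈ (Q ι').a \ (Q ι).a, ∀ β' ∈ (Q ι').a \ (Q ι).a,
          p α β = p α' β' → α = α' ∧ β = β' := by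
        intro α hα α' hα' β hβ β' hβ' hp
        have hαt := htd α hα
        have hα't := htd α' hα'
        have hβt := htd' β hβ
        have hβ't := htd' β' hβ'
        have hαβ : α < β := lt_of_lt_of_le (htub α hαt) (htlb' β hβt)
        have hαβ' : α < β' := lt_of_lt_of_le (htub α hαt) (htlb' β' hβ't)
        have hα'β : α' < β := lt_of_lt_of_le (htub α' hα't) (htlb' β hβt)
        have hα'β' : α' < β' := lt_of_lt_of_le (htub α' hα't) (htlb' β' hβ't)
        rcases lt_trichotomy β β' with h | h | h
        · exfalso
          apply K4 α hαt β hβt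
          exact Or.inr ⟨β, hβt, β', hβ't, h, ⟨α, hαβ, rfl⟩, ⟨α', hα'β, hp.symm⟩⟩
        · subst h
          refine ⟨?_, rfl⟩
          by_contra hne
          rcases lt_or_gt_of_ne hne with hl | hl
          · exact hinj α α' β hl hα'β hp
          · exact hinj α' α β hl hαβ hp.symm
        · exfalso
          apply K4 α' hα't β' hβ't
          exact Or.inr ⟨β', hβ't, β, hβt, h, ⟨α', hα'β', rfl⟩, ⟨α, hαβ', hp⟩⟩
      exact buildExt (Q ι) (Q ι') W (hWdom _ (hQS₀ ι)) (hWdom _ (hQS₀ ι'))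
        (fun x hx => hWw _ (hQS₀ ι) _ (hQS₀ ι') x hx) hfR h3 h5 h6
    -- conclusion
    refine ⟨Q '' J, ?_, ?_, ?_⟩
    · rintro q ⟨ι, _, rfl⟩
      exact (hQS₀ ι).1
    · refine unc_image Q ?_ hJ
      intro ι1 _ ι2 _ heq
      apply hσmono.injective
      apply he_inj
      have h := congrArg gE heq
      rw [(hqa _ (he_mem (σ ι1))).2, (hqa _ (he_mem (σ ι2))).2] at h
      exact h
    · rintro q ⟨ι, hι, rfl⟩ q' ⟨ι', hι', rfl⟩
      rcases lt_trichotomy ι ι' with h | h | h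
      · exact key ι ι' hι hι' h
      · subst h
        exact ⟨Q ι, QLe.refl _, QLe.refl _⟩
      · exact (key ι' ι hι' hι h).symm
end
end
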